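/- Let V be a finite-dimensional inner product space, let ε be a self-adjoint involution on V (the ℤ₂-grading operator), and let D be a self-adjoint operator on V that anticommutes with ε. Then for all t > 0, Tr(ε ∘ exp(-t D²)) is constant in t, and equals Tr(ε ∘ P) where P is the orthogonal projection onto ker D. In particular, Tr(ε exp(-tD²)) = dim ker(D restricted to the +1 eigenspace of ε) − dim ker(D restricted to the −1 eigenspace of ε). -/

import Mathlib

open ContinuousLinearMap Nat

lemma exp_apply_eigenvec' {V : Type*} [NormedAddCommGroup V] [InnerProductSpace ℂ V]
    [FiniteDimensional ℂ V] (B : V →L[ℂ] V) (v : V) (c : ℂ) (h : B v = c • v) :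
    NormedSpace.exp B v = Complex.exp c • v := by
  have hpow : ∀ n : ℕ, (B ^ n) v = c ^ n • v := by
    intro n; induction n with
    | zero => simp
    | succ n ih =>
      rw [pow_succ, mul_apply_eq_comp, h, map_smul, ih, smul_smul, pow_succ, mul_comm]
  have hsum : Summable fun n : ℕ => ((n ! : ℂ)⁻¹) • B ^ n :=
    NormedSpace.expSeries_summable' B
  have h1 : NormedSpace.exp B v = ∑' n : ℕ, ((n ! : ℂ)⁻¹) • (B ^ n) v := by
    rw [NormedSpace.exp_eq_tsum (𝕂 := ℂ)]
    simpa using (ContinuousLinearMap.apply ℂ V v).map_tsum hsum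
  rw [h1]
  have h2 : ∀ n : ℕ, ((n ! : ℂ)⁻¹) • (B ^ n) v = (((n ! : ℂ)⁻¹) * c ^ n) • v := by
    intro n; rw [hpow n, smul_smul]
  simp_rw [h2]
  have hs2 : Summable fun n : ℕ => ((n ! : ℂ)⁻¹ * c ^ n) := by
    have := NormedSpace.expSeries_summable' (𝕂 := ℂ) c
    simpa [smul_eq_mul] using this
  rw [hs2.tsum_smul_const v]
  congr 1
  rw [Complex.exp_eq_exp_ℂ, NormedSpace.exp_eq_tsum (𝕂 := ℂ)]
  simp [smul_eq_mul]

theorem mckeanSinger_finiteDimensional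
    (V : Type*) [NormedAddCommGroup V] [InnerProductSpace ℂ V] [FiniteDimensional ℂ V]
    (ε D : V →L[ℂ] V)
    (hinv : ε * ε = 1)
    (hεsa : ContinuousLinearMap.adjoint ε = ε)
    (hDsa : ContinuousLinearMap.adjoint D = D)
    (hanti : D * ε = -(ε * D)) :
    ∀ t : ℝ, 0 < t →
      (LinearMap.trace ℂ V ((ε * NormedSpace.exp (-(t • (D * D)))) : V →ₗ[ℂ] V)
        = LinearMap.trace ℂ V
            ((ε ∘L ((LinearMap.ker (D : V →ₗ[ℂ] V)).subtypeL ∘L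
              Submodule.orthogonalProjectionOnto (LinearMap.ker (D : V →ₗ[ℂ] V)))) : V →ₗ[ℂ] V)) ∧
      (LinearMap.trace ℂ V ((ε * NormedSpace.exp (-(t • (D * D)))) : V →ₗ[ℂ] V)
        = (Module.finrank ℂ
            ↥(LinearMap.ker (D : V →ₗ[ℂ] V) ⊓ Module.End.eigenspace (ε : V →ₗ[ℂ] V) 1) : ℂ)
          - (Module.finrank ℂ
            ↥(LinearMap.ker (D : V →ₗ[ℂ] V) ⊓ Module.End.eigenspace (ε : V →ₗ[ℂ] V) (-1)) : ℂ)) := by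
  classical
  intro t ht
  set K : Submodule ℂ V := LinearMap.ker (D : V →ₗ[ℂ] V) with hK
  set εl : V →ₗ[ℂ] V := (ε : V →ₗ[ℂ] V) with hεl
  set Dl : V →ₗ[ℂ] V := (D : V →ₗ[ℂ] V) with hDl
  set Tl : V →ₗ[ℂ] V := ((D * D : V →L[ℂ] V) : V →ₗ[ℂ] V) with hTl
  set Pl : V →ₗ[ℂ] V := ((K.subtypeL ∘L Submodule.orthogonalProjectionOnto K : V →L[ℂ] V) : V →ₗ[ℂ] V) with hPl
  have hTD : Tl = Dl * Dl := by rw [hTl, hDl]; rfl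
  -- ε and D basic algebra, linear-map level
  have hinvl : εl * εl = 1 := by
    apply LinearMap.ext; intro x
    have := congrArg (fun f : V →L[ℂ] V => f x) hinv
    simpa [hεl] using this
  have hεDl : εl * Dl = -(Dl * εl) := by
    apply LinearMap.ext; intro x
    have h := congrArg (fun f : V →L[ℂ] V => f x) hanti
    simp only [mul_apply_eq_comp, ContinuousLinearMap.neg_apply] at h
    show ε (D x) = -(D (ε x))
    rw [h, neg_neg]
  -- self-adjointness
  have hDsa' : IsSelfAdjoint D := hDsa
  have hTsa : IsSelfAdjoint (D * D) := by
    rw [IsSelfAdjoint, star_mul, ← ContinuousLinearMap.star_eq_adjoint] at *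
    rw [hDsa']
  have hT : (Tl).IsSymmetric := hTsa.isSymmetric
  have hDsym : (Dl).IsSymmetric := hDsa'.isSymmetric
  -- ker T = K
  have hkerT : LinearMap.ker Tl = K := by
    apply le_antisymm
    · intro x hx
      have hx' : Tl x = 0 := hx
      have h4 : D (D x) = 0 := hx'
      have h3 : (inner ℂ (D x) (D x) : ℂ) = inner ℂ x (D (D x)) := hDsym x (D x)
      rw [h4, inner_zero_right] at h3
      have : D x = 0 := by rwa [inner_self_eq_zero] at h3
      simpa [hK, hDl, LinearMap.mem_ker] using this
    · intro x hx
      have : D x = 0 := hx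
      show Tl x = 0
      rw [hTl]
      simp only [ContinuousLinearMap.coe_coe, mul_apply_eq_comp, this, map_zero]
  -- ε preserves K
  have hεK : ∀ x ∈ K, εl x ∈ K := by
    intro x hx
    have hx' : D x = 0 := hx
    show D (ε x) = 0
    have := congrArg (fun f : V →L[ℂ] V => f x) hanti
    simp only [mul_apply_eq_comp, ContinuousLinearMap.neg_apply] at this
    rw [this, hx', map_zero, neg_zero]
  -- P fixes K, P maps into K
  have hPfix : ∀ x ∈ K, Pl x = x := by
    intro x hx
    show ((Submodule.orthogonalProjectionOnto K x : V)) = x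
    rw [← Submodule.starProjection_apply]; rwa [Submodule.starProjection_eq_self_iff]
  have hPmem : ∀ x, Pl x ∈ K := fun x => (Submodule.orthogonalProjectionOnto K x).2
  -- spectral setup
  set n := Module.finrank ℂ V with hn
  have hn' : Module.finrank ℂ V = n := rfl
  set b := hT.eigenvectorBasis hn' with hb
  set μ := hT.eigenvalues hn' with hμ
  have hbe : ∀ i, Tl (b i) = ((μ i : ℝ) : ℂ) • b i := fun i =>
    Module.End.mem_eigenspace_iff.mp (hT.hasEigenvector_eigenvectorBasis hn' i).1
  -- interpolation polynomial
  set s : Finset ℂ := Finset.image (fun i => ((μ i : ℝ) : ℂ)) Finset.univ with hs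
  set g : ℂ → ℂ := fun z => Complex.exp (-((t : ℂ) * z)) * z⁻¹ with hg
  set p : Polynomial ℂ := Lagrange.interpolate s id g with hp
  have hpeval : ∀ i, Polynomial.eval ((μ i : ℝ) : ℂ) p = g ((μ i : ℝ) : ℂ) := by
    intro i
    have : ((μ i : ℝ) : ℂ) ∈ s := Finset.mem_image_of_mem _ (Finset.mem_univ i)
    exact Lagrange.eval_interpolate_at_node g (Set.injOn_id _) this
  set q : V →ₗ[ℂ] V := Polynomial.aeval Tl p with hq
  set C : V →ₗ[ℂ] V := Dl * q with hC
  -- the key operator identity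
  have hkey : ((NormedSpace.exp (-(t • (D * D))) : V →L[ℂ] V) : V →ₗ[ℂ] V)
      = Pl + Dl * C := by
    apply b.toBasis.ext
    intro i
    simp only [OrthonormalBasis.coe_toBasis]
    have heig : (-(t • (D * D)) : V →L[ℂ] V) (b i)
        = (-(((t : ℝ) : ℂ) * ((μ i : ℝ) : ℂ))) • b i := by
      have h1 : (D * D : V →L[ℂ] V) (b i) = ((μ i : ℝ) : ℂ) • b i := hbe i
      simp only [ContinuousLinearMap.neg_apply, ContinuousLinearMap.smul_apply, h1]
      rw [RCLike.real_smul_eq_coe_smul (K := ℂ) t, smul_smul, ← neg_smul]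
      with_unfolding_all rfl
    have hexp : (NormedSpace.exp (-(t • (D * D))) : V →L[ℂ] V) (b i)
        = Complex.exp (-(((t : ℝ) : ℂ) * ((μ i : ℝ) : ℂ))) • b i :=
      exp_apply_eigenvec' _ _ _ heig
    have hqv : q (b i) = Polynomial.eval ((μ i : ℝ) : ℂ) p • b i :=
      Module.End.aeval_apply_of_hasEigenvector (hT.hasEigenvector_eigenvectorBasis hn' i)
    have hDDq : (Dl * C) (b i)
        = (Polynomial.eval ((μ i : ℝ) : ℂ) p * ((μ i : ℝ) : ℂ)) • b i := by
      show Dl (Dl (q (b i))) = _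
      rw [hqv, map_smul, map_smul, ← Module.End.mul_apply, ← hTD, hbe i, smul_smul]
    show (NormedSpace.exp (-(t • (D * D))) : V →L[ℂ] V) (b i) = Pl (b i) + (Dl * C) (b i)
    rw [hexp, hDDq]
    by_cases hzero : (μ i : ℝ) = 0
    · have hbK : b i ∈ K := by
        rw [← hkerT]
        show Tl (b i) = 0
        rw [hbe i, hzero]; simp
      rw [hPfix _ hbK]
      simp [hzero]
    · -- b i orthogonal to K
      have hbK : b i ∈ Kᗮ := by
        rw [Submodule.mem_orthogonal]
        intro u hu
        have hu' : Tl u = 0 := LinearMap.mem_ker.mp (by rw [hkerT]; exact hu)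
        have := hT u (b i)
        rw [hu', hbe i, inner_zero_left, inner_smul_right] at this
        have hμne : ((μ i : ℝ) : ℂ) ≠ 0 := by exact_mod_cast hzero
        field_simp at this
        exact (mul_eq_zero.mp this.symm).resolve_left hμne
      have hP0 : Pl (b i) = 0 := by
        show ((Submodule.orthogonalProjectionOnto K (b i) : K) : V) = 0
        rw [Submodule.orthogonalProjectionOnto_apply_of_mem_orthogonal hbK]
        rfl
      rw [hP0, zero_add, hpeval i, hg]
      have hμne : ((μ i : ℝ) : ℂ) ≠ 0 := by exact_mod_cast hzero
      rw [mul_assoc, inv_mul_cancel₀ hμne, mul_one]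
  -- commutation
  have hqD : Commute Dl q := by
    refine Algebra.commute_of_mem_adjoin_singleton_of_commute
      (Polynomial.aeval_mem_adjoin_singleton ℂ _) ?_
    rw [hTD]; exact (Commute.refl Dl).mul_right (Commute.refl Dl)
  have hCD : C * Dl = Dl * C := by
    rw [hC, mul_assoc, ← hqD.eq, ← mul_assoc]
  -- trace of ε D C vanishes
  have htr0 : LinearMap.trace ℂ V (εl * (Dl * C)) = 0 := by
    have h1 : εl * (Dl * C) = -(Dl * (εl * C)) := by
      rw [← mul_assoc, hεDl, neg_mul, mul_assoc]
    have h2 : LinearMap.trace ℂ V (εl * (Dl * C))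
        = -(LinearMap.trace ℂ V (εl * (Dl * C))) := by
      nth_rewrite 1 [h1]
      rw [map_neg]
      rw [LinearMap.trace_mul_comm]
      rw [mul_assoc, hCD]
    linear_combination (norm := ring_nf) ((1 : ℂ) / 2) * h2
  -- part 1
  have hPart1 : LinearMap.trace ℂ V
      (εl * ((NormedSpace.exp (-(t • (D * D))) : V →L[ℂ] V) : V →ₗ[ℂ] V))
      = LinearMap.trace ℂ V (εl * Pl) := by
    rw [hkey, mul_add, map_add, htr0, add_zero]
  have hcoeP : ((ε ∘L (K.subtypeL ∘L Submodule.orthogonalProjectionOnto K) : V →L[ℂ] V) : V →ₗ[ℂ] V)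
      = εl * Pl := by
    rfl
  constructor
  · rw [hPart1, hcoeP]
  · rw [hPart1]
    -- part 2: projections Qp, Qm
    set Kp : Submodule ℂ V := K ⊓ Module.End.eigenspace εl 1 with hKp
    set Km : Submodule ℂ V := K ⊓ Module.End.eigenspace εl (-1) with hKm
    set Qp : V →ₗ[ℂ] V := (2 : ℂ)⁻¹ • ((1 + εl) * Pl) with hQp
    set Qm : V →ₗ[ℂ] V := (2 : ℂ)⁻¹ • ((1 - εl) * Pl) with hQm
    have hε2 : ∀ x, εl (εl x) = x := by
      intro x
      have := congrArg (fun f : V →ₗ[ℂ] V => f x) hinvl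
      simpa using this
    have hQpProj : LinearMap.IsProj Kp Qp := by
      constructor
      · intro x
        have hmem : Pl x ∈ K := hPmem x
        constructor
        · show Qp x ∈ K
          rw [hQp]
          simp only [LinearMap.smul_apply, Module.End.mul_apply, LinearMap.add_apply,
            Module.End.one_apply]
          exact K.smul_mem _ (K.add_mem hmem (hεK _ hmem))
        · rw [SetLike.mem_coe, Module.End.mem_eigenspace_iff, one_smul]
          rw [hQp]
          simp only [LinearMap.smul_apply, Module.End.mul_apply, LinearMap.add_apply,
            Module.End.one_apply, map_smul, map_add, hε2]
          rw [add_comm]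
      · intro x hx
        obtain ⟨hx1, hx2⟩ := hx
        rw [SetLike.mem_coe, Module.End.mem_eigenspace_iff, one_smul] at hx2
        rw [hQp]
        simp only [LinearMap.smul_apply, Module.End.mul_apply, LinearMap.add_apply,
          Module.End.one_apply, hPfix _ hx1, hx2]
        rw [← two_smul ℂ x, smul_smul]
        norm_num
    have hQmProj : LinearMap.IsProj Km Qm := by
      constructor
      · intro x
        have hmem : Pl x ∈ K := hPmem x
        constructor
        · show Qm x ∈ K
          rw [hQm]
          simp only [LinearMap.smul_apply, Module.End.mul_apply, LinearMap.sub_apply,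
            Module.End.one_apply]
          exact K.smul_mem _ (K.sub_mem hmem (hεK _ hmem))
        · rw [SetLike.mem_coe, Module.End.mem_eigenspace_iff]
          rw [hQm]
          simp only [LinearMap.smul_apply, Module.End.mul_apply, LinearMap.sub_apply,
            Module.End.one_apply, map_smul, map_sub, hε2]
          rw [smul_comm]
          congr 1
          rw [neg_smul, one_smul, neg_sub]
      · intro x hx
        obtain ⟨hx1, hx2⟩ := hx
        rw [SetLike.mem_coe, Module.End.mem_eigenspace_iff] at hx2
        rw [hQm]
        simp only [LinearMap.smul_apply, Module.End.mul_apply, LinearMap.sub_apply,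
          Module.End.one_apply, hPfix _ hx1, hx2]
        rw [neg_smul, one_smul, sub_neg_eq_add, ← two_smul ℂ x, smul_smul]
        norm_num
    have hsplit : εl * Pl = Qp - Qm := by
      rw [hQp, hQm, ← smul_sub, add_mul, sub_mul, one_mul, add_sub_sub_cancel,
        ← two_smul ℂ (εl * Pl), smul_smul]
      norm_num
    rw [hsplit, map_sub, hQpProj.trace, hQmProj.trace]
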